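/- arXiv:2505.06216 — 3 statements merged into one kernel-verified Lean document; each statement's English description precedes it below -/
import Mathlib

section
/- Let d ≥ 1 be an integer and let P_R ∈ ℝ[x] be a polynomial of degree at most d such that: (1) P_R has parity (d mod 2); (2) |P_R(x)| ≤ 1 for all x ∈ [−1,+1]. Then there exists a polynomial P ∈ ℂ[x] of degree at most d whose real part equals P_R (i.e. Re P(x) = P_R(x) for all real x) and which satisfies: P has parity (d mod 2); |P(x)| ≤ 1 for all x ∈ [−1,+1]; |P(x)| ≥ 1 for all real x with |x| ≥ 1; and, if d is even, P(ix)·P*(ix) ≥ 1 for all x ∈ ℝ. -/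
open Polynomial
open scoped ComplexOrder

namespace RQSP


/-- representation a = p² + X(1-X)q², for even-degree Lukács. -/
def Rep0 (m : ℕ) (a : ℝ[X]) : Prop :=
  ∃ p q : ℝ[X], a = p^2 + X*(1-X)*q^2 ∧ p.natDegree ≤ m ∧ (q = 0 ∨ q.natDegree + 1 ≤ m)

/-- representation a = X p² + (1-X) q², for odd-degree Lukács. -/
def Rep1 (m : ℕ) (a : ℝ[X]) : Prop :=
  ∃ p q : ℝ[X], a = X*p^2 + (1-X)*q^2 ∧ p.natDegree ≤ m ∧ q.natDegree ≤ m

lemma nd_X : (X : ℝ[X]).natDegree ≤ 1 := by simp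
lemma nd_1X : (1 - X : ℝ[X]).natDegree ≤ 1 :=
  le_trans (natDegree_sub_le _ _) (by simp)

lemma Rep0.mul {m k : ℕ} {a b : ℝ[X]} (ha : Rep0 m a) (hb : Rep0 k b) :
    Rep0 (m + k) (a * b) := by
  obtain ⟨p₁, q₁, h1, hp1, hq1⟩ := ha
  obtain ⟨p₂, q₂, h2, hp2, hq2⟩ := hb
  refine ⟨p₁*p₂ + X*(1-X)*(q₁*q₂), p₁*q₂ - q₁*p₂, by rw [h1, h2]; ring, ?_, ?_⟩
  · refine le_trans (natDegree_add_le _ _) (max_le ?_ ?_)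
    · exact le_trans (natDegree_mul_le) (by omega)
    · rcases hq1 with rfl | hq1
      · simp
      rcases hq2 with rfl | hq2
      · simp
      refine le_trans (natDegree_mul_le) ?_
      have := le_trans natDegree_mul_le (add_le_add nd_X nd_1X)
      have := le_trans (natDegree_mul_le (p := q₁) (q := q₂)) (by omega : q₁.natDegree + q₂.natDegree ≤ m + k - 2)
      omega
  · rcases hq1 with rfl | hq1 <;> rcases hq2 with rfl | hq2
    · left; simp
    · right
      have : (p₁*q₂ - 0*p₂) = p₁ * q₂ := by ring
      rw [this]
      have := le_trans (natDegree_mul_le (p := p₁) (q := q₂)) (add_le_add hp1 (by omega : q₂.natDegree ≤ k - 1))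
      omega
    · right
      have : (p₁*0 - q₁*p₂) = -(q₁ * p₂) := by ring
      rw [this, natDegree_neg]
      have := le_trans (natDegree_mul_le (p := q₁) (q := p₂)) (add_le_add (by omega : q₁.natDegree ≤ m - 1) hp2)
      omega
    · right
      refine le_trans (add_le_add_left (natDegree_sub_le _ _) 1) ?_
      have h1 := le_trans (natDegree_mul_le (p := p₁) (q := q₂)) (add_le_add hp1 (by omega : q₂.natDegree ≤ k - 1))
      have h2 := le_trans (natDegree_mul_le (p := q₁) (q := p₂)) (add_le_add (by omega : q₁.natDegree ≤ m - 1) hp2)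
      omega

lemma Rep1.mul {m k : ℕ} {a b : ℝ[X]} (ha : Rep1 m a) (hb : Rep1 k b) :
    Rep0 (m + k + 1) (a * b) := by
  obtain ⟨p₁, q₁, h1, hp1, hq1⟩ := ha
  obtain ⟨p₂, q₂, h2, hp2, hq2⟩ := hb
  refine ⟨X*(p₁*p₂) + (1-X)*(q₁*q₂), p₁*q₂ - q₁*p₂, by rw [h1, h2]; ring, ?_, Or.inr ?_⟩
  · have e1 : (X*(p₁*p₂) : ℝ[X]).natDegree ≤ 1 + (m + k) :=
      le_trans natDegree_mul_le (add_le_add nd_X (le_trans natDegree_mul_le (add_le_add hp1 hp2)))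
    have e2 : ((1-X)*(q₁*q₂) : ℝ[X]).natDegree ≤ 1 + (m + k) :=
      le_trans natDegree_mul_le (add_le_add nd_1X (le_trans natDegree_mul_le (add_le_add hq1 hq2)))
    have := le_trans (natDegree_add_le (X*(p₁*p₂)) ((1-X)*(q₁*q₂))) (max_le e1 e2)
    omega
  · refine le_trans (add_le_add_left (natDegree_sub_le _ _) 1) ?_
    have h1 := le_trans (natDegree_mul_le (p := p₁) (q := q₂)) (add_le_add hp1 hq2)
    have h2 := le_trans (natDegree_mul_le (p := q₁) (q := p₂)) (add_le_add hq1 hp2)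
    omega

lemma Rep0.mul_rep1 {m k : ℕ} {a b : ℝ[X]} (ha : Rep0 m a) (hb : Rep1 k b) :
    Rep1 (m + k) (a * b) := by
  obtain ⟨p₁, q₁, h1, hp1, hq1⟩ := ha
  obtain ⟨p₂, q₂, h2, hp2, hq2⟩ := hb
  refine ⟨p₁*p₂ + (1-X)*(q₁*q₂), p₁*q₂ - X*(q₁*p₂), by rw [h1, h2]; ring, ?_, ?_⟩
  · have e1 : (p₁*p₂ : ℝ[X]).natDegree ≤ m + k :=
      le_trans natDegree_mul_le (add_le_add hp1 hp2)
    have e2 : ((1-X)*(q₁*q₂) : ℝ[X]).natDegree ≤ m + k := by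
      rcases hq1 with rfl | hq1
      · simp
      have := le_trans (natDegree_mul_le (p := q₁) (q := q₂)) (add_le_add (show q₁.natDegree ≤ m - 1 by omega) hq2)
      refine le_trans natDegree_mul_le ?_
      have h3 := nd_1X
      omega
    exact le_trans (natDegree_add_le _ _) (max_le e1 e2)
  · have e1 : (p₁*q₂ : ℝ[X]).natDegree ≤ m + k :=
      le_trans natDegree_mul_le (add_le_add hp1 hq2)
    have e2 : (X*(q₁*p₂) : ℝ[X]).natDegree ≤ m + k := by
      rcases hq1 with rfl | hq1
      · simp
      have := le_trans (natDegree_mul_le (p := q₁) (q := p₂)) (add_le_add (show q₁.natDegree ≤ m - 1 by omega) hp2)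
      refine le_trans natDegree_mul_le ?_
      have h3 := nd_X
      omega
    exact le_trans (natDegree_sub_le _ _) (max_le e1 e2)

/-- Rep0 m → Rep1 m  (multiply by 1 = X + (1-X)). -/
lemma Rep0.toRep1 {m : ℕ} {a : ℝ[X]} (ha : Rep0 m a) : Rep1 m a := by
  have := ha.mul_rep1 (b := 1) (k := 0) ⟨1, 1, by ring, by simp, by simp⟩
  simpa using this

/-- Rep1 m → Rep0 (m+1). -/
lemma Rep1.toRep0 {m : ℕ} {a : ℝ[X]} (ha : Rep1 m a) : Rep0 (m + 1) a := by
  have := ha.mul (b := 1) (k := 0) ⟨1, 1, by ring, by simp, by simp⟩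
  simpa using this




lemma rep0_const {c : ℝ} (hc : 0 ≤ c) : Rep0 0 (C c) :=
  ⟨C (Real.sqrt c), 0, by
    rw [← C_pow, Real.sq_sqrt hc]; ring, by simp, Or.inl rfl⟩

lemma rep1_linear {α β : ℝ} (hα : 0 ≤ α) (hβ : 0 ≤ β) :
    Rep1 0 (C α * X + C β * (1 - X)) :=
  ⟨C (Real.sqrt α), C (Real.sqrt β), by
    rw [← C_pow, ← C_pow, Real.sq_sqrt hα, Real.sq_sqrt hβ]; ring, by simp, by simp⟩

lemma rep1_X_sub_C {r : ℝ} (hr : r ≤ 0) : Rep1 0 (X - C r) := by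
  have : (X - C r : ℝ[X]) = C (1 - r) * X + C (-r) * (1 - X) := by
    simp only [C_sub, C_neg, C_1]; ring
  rw [this]
  exact rep1_linear (by linarith) (by linarith)

lemma rep1_C_sub_X {r : ℝ} (hr : 1 ≤ r) : Rep1 0 (C r - X) := by
  have : (C r - X : ℝ[X]) = C (r - 1) * X + C r * (1 - X) := by
    simp only [C_sub, C_1]; ring
  rw [this]
  exact rep1_linear (by linarith) (by linarith)

lemma rep0_quadratic (u v : ℝ) (hv : v ≠ 0) :
    Rep0 1 (X ^ 2 - C (2 * u) * X + C (u ^ 2 + v ^ 2)) := by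
  set b := Real.sqrt (u ^ 2 + v ^ 2) with hbdef
  set s := Real.sqrt ((u - 1) ^ 2 + v ^ 2) with hsdef
  have hb2 : b ^ 2 = u ^ 2 + v ^ 2 := Real.sq_sqrt (by positivity)
  have hs2 : s ^ 2 = (u - 1) ^ 2 + v ^ 2 := Real.sq_sqrt (by positivity)
  have hbu : |u| ≤ b := by
    rw [hbdef, ← Real.sqrt_sq_eq_abs]
    exact Real.sqrt_le_sqrt (by nlinarith)
  have hsu : |u - 1| ≤ s := by
    rw [hsdef, ← Real.sqrt_sq_eq_abs]
    exact Real.sqrt_le_sqrt (by nlinarith)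
  set a := -b - s with hadef
  have ha2 : 1 ≤ a ^ 2 := by
    have h1 : 1 ≤ |u| + |u - 1| := by
      rcases abs_cases u with ⟨h, _⟩ | ⟨h, _⟩ <;> rcases abs_cases (u - 1) with ⟨h', _⟩ | ⟨h', _⟩ <;> linarith
    have hb0 : 0 ≤ b := Real.sqrt_nonneg _
    have hs0 : 0 ≤ s := Real.sqrt_nonneg _
    nlinarith [abs_nonneg u, abs_nonneg (u-1)]
  set c := Real.sqrt (a ^ 2 - 1) with hcdef
  have hc2 : c ^ 2 = a ^ 2 - 1 := Real.sq_sqrt (by linarith)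
  -- scalar identities
  have k1 : a ^ 2 - c ^ 2 = 1 := by rw [hc2]; ring
  have k2 : 2 * a * b + c ^ 2 = -(2 * u) := by
    rw [hc2, hadef]; nlinarith [hb2, hs2]
  have k3 : b ^ 2 = u ^ 2 + v ^ 2 := hb2
  refine ⟨C a * X + C b, C c, ?_, ?_, ?_⟩
  · have K1 : (C a)^2 - (C c)^2 = (1 : ℝ[X]) := by
      rw [← C_pow, ← C_pow, ← C_sub, k1, C_1]
    have K2 : (2 : ℝ[X]) * C a * C b + (C c)^2 = - C (2*u) := by
      rw [← C_pow, show ((2:ℝ[X]) = C 2) from (map_ofNat C 2).symm,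
        ← C_mul, ← C_mul, ← C_add, ← C_neg]
      exact congrArg C (by linarith [k2])
    have K3 : (C b)^2 = C (u^2 + v^2) := by rw [← C_pow, k3]
    linear_combination -(X^2 * K1) - X * K2 - K3
  · refine le_trans (natDegree_add_le _ _) (max_le ?_ (by simp))
    exact le_trans natDegree_mul_le (by simp)
  · right; simp




/-- Nonnegativity on a punctured open interval extends to the closed interval. -/
lemma nonneg_Icc_of_punctured (b : ℝ[X]) (r : ℝ)
    (h : ∀ t ∈ Set.Ioo (0:ℝ) 1, t ≠ r → 0 ≤ b.eval t) :
    ∀ t ∈ Set.Icc (0:ℝ) 1, 0 ≤ b.eval t := by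
  have hclosed : IsClosed {x : ℝ | 0 ≤ b.eval x} :=
    isClosed_le continuous_const (b.continuous_aeval)
  have hsub : Set.Ioo (0:ℝ) 1 \ {r} ⊆ {x : ℝ | 0 ≤ b.eval x} := fun t ht => h t ht.1 ht.2
  have h1 : Set.Ioo (0:ℝ) 1 ⊆ closure (Set.Ioo (0:ℝ) 1 \ {r}) := by
    intro t ht
    by_cases htr : t = r
    · subst htr
      have hss : Set.Ioo t 1 ⊆ Set.Ioo (0:ℝ) 1 \ {t} :=
        fun y hy => ⟨⟨lt_trans ht.1 hy.1, hy.2⟩, ne_of_gt hy.1⟩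
      have : t ∈ closure (Set.Ioo t 1) := by
        rw [closure_Ioo (ne_of_lt ht.2)]
        exact ⟨le_refl _, le_of_lt ht.2⟩
      exact closure_mono hss this
    · exact subset_closure ⟨ht, htr⟩
  have h2 : Set.Icc (0:ℝ) 1 ⊆ closure (Set.Ioo (0:ℝ) 1 \ {r}) := by
    rw [← closure_Ioo (zero_ne_one (α := ℝ))]
    exact closure_minimal h1 isClosed_closure
  intro t ht
  exact (hclosed.closure_subset_iff.mpr hsub) (h2 ht)

/-- Interior root of a polynomial nonnegative on `[0,1]` is a double root,
and the quotient is still nonnegative. -/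
lemma double_root_divide {a : ℝ[X]} {r : ℝ} (hr : r ∈ Set.Ioo (0:ℝ) 1)
    (hnn : ∀ t ∈ Set.Icc (0:ℝ) 1, 0 ≤ a.eval t) (h0 : a.IsRoot r) :
    ∃ b : ℝ[X], a = (X - C r)^2 * b ∧ ∀ t ∈ Set.Icc (0:ℝ) 1, 0 ≤ b.eval t := by
  have hmin : IsLocalMin (fun t => a.eval t) r := by
    refine Filter.eventually_of_mem (Ioo_mem_nhds hr.1 hr.2) (fun t ht => ?_)
    simp only [h0.eq_zero]
    exact hnn t (Set.Ioo_subset_Icc_self ht)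
  have hderiv : a.derivative.eval r = 0 := by
    have := hmin.deriv_eq_zero
    rwa [Polynomial.deriv] at this
  obtain ⟨c, hc⟩ := (dvd_iff_isRoot.mpr h0)
  have hcr : c.IsRoot r := by
    have : a.derivative = c + (X - C r) * c.derivative := by
      rw [hc, derivative_mul, derivative_sub, derivative_X, derivative_C]; ring
    have h2 := hderiv
    rw [this] at h2
    simpa using h2
  obtain ⟨b, hb⟩ := (dvd_iff_isRoot.mpr hcr)
  refine ⟨b, by rw [hc, hb]; ring, ?_⟩
  refine nonneg_Icc_of_punctured b r (fun t ht htr => ?_)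
  have ha := hnn t (Set.Ioo_subset_Icc_self ht)
  rw [hc, hb] at ha
  simp only [eval_mul, eval_pow, eval_sub, eval_X, eval_C] at ha ⊢
  have htr' : t - r ≠ 0 := sub_ne_zero.mpr htr
  have hpos : 0 < (t - r)^2 := by positivity
  nlinarith [ha]

/-- Root at `r ≤ 0`: divide keeping nonnegativity. -/
lemma left_root_divide {a : ℝ[X]} {r : ℝ} (hr : r ≤ 0)
    (hnn : ∀ t ∈ Set.Icc (0:ℝ) 1, 0 ≤ a.eval t) (h0 : a.IsRoot r) :
    ∃ b : ℝ[X], a = (X - C r) * b ∧ ∀ t ∈ Set.Icc (0:ℝ) 1, 0 ≤ b.eval t := by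
  obtain ⟨b, hb⟩ := (dvd_iff_isRoot.mpr h0)
  refine ⟨b, hb, nonneg_Icc_of_punctured b r (fun t ht _ => ?_)⟩
  have ha := hnn t (Set.Ioo_subset_Icc_self ht)
  rw [hb] at ha
  simp only [eval_mul, eval_sub, eval_X, eval_C] at ha ⊢
  have hpos : 0 < t - r := by linarith [ht.1]
  nlinarith [ha]

/-- Root at `r ≥ 1`: divide by `C r - X` keeping nonnegativity. -/
lemma right_root_divide {a : ℝ[X]} {r : ℝ} (hr : 1 ≤ r)
    (hnn : ∀ t ∈ Set.Icc (0:ℝ) 1, 0 ≤ a.eval t) (h0 : a.IsRoot r) :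
    ∃ b : ℝ[X], a = (C r - X) * b ∧ ∀ t ∈ Set.Icc (0:ℝ) 1, 0 ≤ b.eval t := by
  obtain ⟨c, hc⟩ := (dvd_iff_isRoot.mpr h0)
  refine ⟨-c, by rw [hc]; ring, nonneg_Icc_of_punctured (-c) r (fun t ht _ => ?_)⟩
  have ha := hnn t (Set.Ioo_subset_Icc_self ht)
  rw [hc] at ha
  simp only [eval_mul, eval_sub, eval_neg, eval_X, eval_C] at ha ⊢
  have hpos : 0 < r - t := by linarith [ht.2]
  nlinarith [ha]

/-- Quadratic factor from a nonreal complex root, with nonnegative quotient. -/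
lemma quadratic_divide {a : ℝ[X]} (hdeg : 1 ≤ a.natDegree)
    (hnn : ∀ t ∈ Set.Icc (0:ℝ) 1, 0 ≤ a.eval t)
    (hnoroot : ¬ ∃ r : ℝ, a.IsRoot r) :
    ∃ (u v : ℝ) (b : ℝ[X]), v ≠ 0 ∧
      a = (X^2 - C (2*u) * X + C (u^2 + v^2)) * b ∧
      ∀ t ∈ Set.Icc (0:ℝ) 1, 0 ≤ b.eval t := by
  have ha0 : a ≠ 0 := fun h => by simp [h] at hdeg
  have hdegpos : 0 < (a.map (algebraMap ℝ ℂ)).degree := by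
    rw [degree_map_eq_of_injective (algebraMap ℝ ℂ).injective]
    exact lt_of_lt_of_le (by norm_num) ((Nat.one_le_cast.mpr hdeg).trans_eq (degree_eq_natDegree ha0).symm)
  obtain ⟨z, hz⟩ := Complex.exists_root hdegpos
  have hzroot : aeval z a = 0 := by rwa [IsRoot, eval_map, ← aeval_def] at hz
  have him : z.im ≠ 0 := by
    intro h
    apply hnoroot
    refine ⟨z.re, ?_⟩
    have hz' : z = (z.re : ℂ) := Complex.ext rfl (by simp [h])
    rw [hz'] at hzroot
    have h2 : ((a.eval z.re : ℝ) : ℂ) = 0 := by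
      rw [← hzroot, show ((z.re : ℝ) : ℂ) = algebraMap ℝ ℂ z.re from rfl,
        aeval_algebraMap_apply_eq_algebraMap_eval]
      rfl
    exact_mod_cast h2
  have hdvd := Polynomial.quadratic_dvd_of_aeval_eq_zero_im_ne_zero a hzroot him
  have hnorm : (‖z‖^2 : ℝ) = z.re^2 + z.im^2 := by
    rw [Complex.sq_norm, Complex.normSq_apply]; ring
  rw [hnorm] at hdvd
  obtain ⟨b, hb⟩ := hdvd
  refine ⟨z.re, z.im, b, him, hb, fun t ht => ?_⟩
  have ha := hnn t ht
  rw [hb] at ha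
  simp only [eval_mul, eval_add, eval_sub, eval_pow, eval_X, eval_C] at ha ⊢
  have him2 : 0 < z.im^2 := by positivity
  have hq : 0 < t^2 - 2*z.re*t + (z.re^2 + z.im^2) := by nlinarith [sq_nonneg (t - z.re), him2]
  nlinarith [ha]




lemma eq_lin {a : ℝ[X]} (h : a.natDegree ≤ 1) :
    a = C (a.eval 1) * X + C (a.eval 0) * (1 - X) := by
  have h1 := Polynomial.eq_X_add_C_of_natDegree_le_one h
  rw [h1]
  simp only [eval_add, eval_mul, eval_C, eval_X, eval_one, mul_one, mul_zero, zero_add]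
  rw [C_add]
  ring

lemma lukacs_pair (m : ℕ) :
    (∀ a : ℝ[X], a.natDegree ≤ 2*m → (∀ t ∈ Set.Icc (0:ℝ) 1, 0 ≤ a.eval t) → Rep0 m a) ∧
    (∀ a : ℝ[X], a.natDegree ≤ 2*m+1 → (∀ t ∈ Set.Icc (0:ℝ) 1, 0 ≤ a.eval t) → Rep1 m a) := by
  induction m with
  | zero =>
    constructor
    · intro a hdeg hnn
      rw [Polynomial.eq_C_of_natDegree_le_zero hdeg]
      have h0 : (0:ℝ) ∈ Set.Icc (0:ℝ) 1 := by norm_num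
      have := hnn 0 h0
      rw [Polynomial.eq_C_of_natDegree_le_zero hdeg] at this
      simp only [eval_C] at this
      exact rep0_const this
    · intro a hdeg hnn
      rw [eq_lin hdeg]
      exact rep1_linear (hnn 1 (by norm_num)) (hnn 0 (by norm_num))
  | succ m ih =>
    have partA : ∀ a : ℝ[X], a.natDegree ≤ 2*(m+1) →
        (∀ t ∈ Set.Icc (0:ℝ) 1, 0 ≤ a.eval t) → Rep0 (m+1) a := by
      intro a hdeg hnn
      by_cases hsmall : a.natDegree ≤ 2*m+1
      · exact (ih.2 a hsmall hnn).toRep0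
      have ha0 : a ≠ 0 := by
        intro h; rw [h] at hsmall; simp at hsmall
      by_cases hroot : ∃ r : ℝ, a.IsRoot r
      · obtain ⟨r, hr⟩ := hroot
        rcases le_or_gt r 0 with h0 | h0
        · obtain ⟨b, hb, hbnn⟩ := left_root_divide h0 hnn hr
          have hbne : b ≠ 0 := by rintro rfl; rw [mul_zero] at hb; exact ha0 hb
          have hdb : b.natDegree ≤ 2*m+1 := by
            have h2 := natDegree_mul (X_sub_C_ne_zero r) hbne
            rw [← hb, natDegree_X_sub_C] at h2; omega
          have h3 := (rep1_X_sub_C h0).mul (ih.2 b hdb hbnn)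
          rw [← hb] at h3
          simpa using h3
        rcases le_or_gt 1 r with h1 | h1
        · obtain ⟨b, hb, hbnn⟩ := right_root_divide h1 hnn hr
          have hbne : b ≠ 0 := by rintro rfl; rw [mul_zero] at hb; exact ha0 hb
          have hne : (C r - X : ℝ[X]) ≠ 0 := by
            intro h; have := congrArg (natDegree) h
            rw [show (C r - X : ℝ[X]) = -(X - C r) by ring, natDegree_neg,
              natDegree_X_sub_C] at this
            simp at this
          have hdb : b.natDegree ≤ 2*m+1 := by
            have h2 := natDegree_mul hne hbne
            rw [← hb, show (C r - X : ℝ[X]) = -(X - C r) by ring, natDegree_neg,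
              natDegree_X_sub_C] at h2
            omega
          have h3 := (rep1_C_sub_X h1).mul (ih.2 b hdb hbnn)
          rw [← hb] at h3
          simpa using h3
        · obtain ⟨b, hb, hbnn⟩ := double_root_divide ⟨h0, h1⟩ hnn hr
          have hbne : b ≠ 0 := by rintro rfl; rw [mul_zero] at hb; exact ha0 hb
          have hdb : b.natDegree ≤ 2*m := by
            have h2 := natDegree_mul (pow_ne_zero 2 (X_sub_C_ne_zero r)) hbne
            rw [← hb, natDegree_pow, natDegree_X_sub_C] at h2
            omega
          have hq : Rep0 1 ((X - C r)^2 : ℝ[X]) :=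
            ⟨X - C r, 0, by ring, by simp [natDegree_X_sub_C], Or.inl rfl⟩
          have h3 := hq.mul (ih.1 b hdb hbnn)
          rw [← hb] at h3
          simpa [add_comm] using h3
      · obtain ⟨u, v, b, hv, hb, hbnn⟩ := quadratic_divide (by omega) hnn hroot
        have hbne : b ≠ 0 := by rintro rfl; rw [mul_zero] at hb; exact ha0 hb
        have hQ : (X^2 - C (2*u) * X + C (u^2 + v^2) : ℝ[X]) =
            C 1 * X^2 + C (-(2*u)) * X + C (u^2+v^2) := by
          simp only [C_neg, C_1]; ring
        have hQdeg : (X^2 - C (2*u) * X + C (u^2 + v^2) : ℝ[X]).natDegree = 2 := by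
          rw [hQ]; exact natDegree_quadratic one_ne_zero
        have hQne : (X^2 - C (2*u) * X + C (u^2 + v^2) : ℝ[X]) ≠ 0 := by
          intro h; rw [h] at hQdeg; simp at hQdeg
        have hdb : b.natDegree ≤ 2*m := by
          have h2 := natDegree_mul hQne hbne
          rw [← hb, hQdeg] at h2
          omega
        have h3 := (rep0_quadratic u v hv).mul (ih.1 b hdb hbnn)
        rw [← hb] at h3
        simpa [add_comm] using h3
    refine ⟨partA, ?_⟩
    intro a hdeg hnn
    by_cases hsmall : a.natDegree ≤ 2*(m+1)
    · exact (partA a hsmall hnn).toRep1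
    have ha0 : a ≠ 0 := by
      intro h; rw [h] at hsmall; simp at hsmall
    by_cases hroot : ∃ r : ℝ, a.IsRoot r
    · obtain ⟨r, hr⟩ := hroot
      rcases le_or_gt r 0 with h0 | h0
      · obtain ⟨b, hb, hbnn⟩ := left_root_divide h0 hnn hr
        have hbne : b ≠ 0 := by rintro rfl; rw [mul_zero] at hb; exact ha0 hb
        have hdb : b.natDegree ≤ 2*(m+1) := by
          have h2 := natDegree_mul (X_sub_C_ne_zero r) hbne
          rw [← hb, natDegree_X_sub_C] at h2; omega
        have h3 := (partA b hdb hbnn).mul_rep1 (rep1_X_sub_C h0)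
        rw [mul_comm, ← hb] at h3
        simpa using h3
      rcases le_or_gt 1 r with h1 | h1
      · obtain ⟨b, hb, hbnn⟩ := right_root_divide h1 hnn hr
        have hbne : b ≠ 0 := by rintro rfl; rw [mul_zero] at hb; exact ha0 hb
        have hne : (C r - X : ℝ[X]) ≠ 0 := by
          intro h; have := congrArg (natDegree) h
          rw [show (C r - X : ℝ[X]) = -(X - C r) by ring, natDegree_neg,
            natDegree_X_sub_C] at this
          simp at this
        have hdb : b.natDegree ≤ 2*(m+1) := by
          have h2 := natDegree_mul hne hbne
          rw [← hb, show (C r - X : ℝ[X]) = -(X - C r) by ring, natDegree_neg,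
            natDegree_X_sub_C] at h2
          omega
        have h3 := (partA b hdb hbnn).mul_rep1 (rep1_C_sub_X h1)
        rw [mul_comm, ← hb] at h3
        simpa using h3
      · obtain ⟨b, hb, hbnn⟩ := double_root_divide ⟨h0, h1⟩ hnn hr
        have hbne : b ≠ 0 := by rintro rfl; rw [mul_zero] at hb; exact ha0 hb
        have hdb : b.natDegree ≤ 2*m+1 := by
          have h2 := natDegree_mul (pow_ne_zero 2 (X_sub_C_ne_zero r)) hbne
          rw [← hb, natDegree_pow, natDegree_X_sub_C] at h2
          omega
        have hq : Rep0 1 ((X - C r)^2 : ℝ[X]) :=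
          ⟨X - C r, 0, by ring, by simp [natDegree_X_sub_C], Or.inl rfl⟩
        have h3 := hq.mul_rep1 (ih.2 b hdb hbnn)
        rw [← hb] at h3
        simpa [add_comm] using h3
    · obtain ⟨u, v, b, hv, hb, hbnn⟩ := quadratic_divide (by omega) hnn hroot
      have hbne : b ≠ 0 := by rintro rfl; rw [mul_zero] at hb; exact ha0 hb
      have hQ : (X^2 - C (2*u) * X + C (u^2 + v^2) : ℝ[X]) =
          C 1 * X^2 + C (-(2*u)) * X + C (u^2+v^2) := by
        simp only [C_neg, C_1]; ring
      have hQdeg : (X^2 - C (2*u) * X + C (u^2 + v^2) : ℝ[X]).natDegree = 2 := by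
        rw [hQ]; exact natDegree_quadratic one_ne_zero
      have hQne : (X^2 - C (2*u) * X + C (u^2 + v^2) : ℝ[X]) ≠ 0 := by
        intro h; rw [h] at hQdeg; simp at hQdeg
      have hdb : b.natDegree ≤ 2*m+1 := by
        have h2 := natDegree_mul hQne hbne
        rw [← hb, hQdeg] at h2
        omega
      have h3 := (rep0_quadratic u v hv).mul_rep1 (ih.2 b hdb hbnn)
      rw [← hb] at h3
      simpa [add_comm] using h3




/-- coefficient of `p.comp (-X)`. -/
lemma coeff_comp_neg_X (A : ℝ[X]) (n : ℕ) :
    (A.comp (-X)).coeff n = (-1)^n * A.coeff n := by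
  induction A using Polynomial.induction_on' with
  | add p q hp hq => simp only [add_comp, coeff_add, hp, hq]; ring
  | monomial k c =>
    rw [← C_mul_X_pow_eq_monomial, mul_comp, C_comp, pow_comp, X_comp]
    have h1 : ((-X : ℝ[X]))^k = C ((-1:ℝ)^k) * X^k := by
      rw [neg_pow, C_pow, C_neg, C_1]
    rw [h1, ← mul_assoc, ← C_mul, coeff_C_mul, coeff_C_mul, coeff_X_pow]
    split_ifs with h
    · subst h; ring
    · ring

lemma even_decomp {A : ℝ[X]} (h : ∀ x : ℝ, A.eval (-x) = A.eval x) :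
    ∃ a : ℝ[X], A = a.comp (X^2) ∧ 2 * a.natDegree = A.natDegree := by
  have hcomp : A.comp (-X) = A := by
    apply Polynomial.funext
    intro x
    rw [eval_comp]
    simp [h x]
  have hodd : ∀ n : ℕ, n % 2 = 1 → A.coeff n = 0 := by
    intro n hn
    have h1 : (A.comp (-X)).coeff n = A.coeff n := by rw [hcomp]
    rw [coeff_comp_neg_X] at h1
    have h2 : ((-1:ℝ))^n = -1 := Odd.neg_one_pow (Nat.odd_iff.mpr hn)
    rw [h2] at h1
    linarith
  refine ⟨Polynomial.contract 2 A, ?_, ?_⟩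
  · have hexp : Polynomial.expand ℝ 2 (Polynomial.contract 2 A) = A := by
      ext n
      rw [Polynomial.coeff_expand (by norm_num : 0 < 2),
        Polynomial.coeff_contract (two_ne_zero)]
      split_ifs with hdvd
      · rw [Nat.div_mul_cancel hdvd]
      · exact (hodd n (by omega)).symm
    conv_lhs => rw [← hexp]
    rw [Polynomial.expand_eq_comp_X_pow]
  · have hexp : Polynomial.expand ℝ 2 (Polynomial.contract 2 A) = A := by
      ext n
      rw [Polynomial.coeff_expand (by norm_num : 0 < 2),
        Polynomial.coeff_contract (two_ne_zero)]
      split_ifs with hdvd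
      · rw [Nat.div_mul_cancel hdvd]
      · exact (hodd n (by omega)).symm
    conv_rhs => rw [← hexp]
    rw [Polynomial.natDegree_expand]
    ring

lemma evalc (p : ℝ[X]) (x : ℝ) :
    (p.map (algebraMap ℝ ℂ)).eval (x:ℂ) = ((p.eval x : ℝ) : ℂ) := by
  rw [eval_map, ← Complex.coe_algebraMap, ← aeval_def,
    aeval_algebraMap_apply_eq_algebraMap_eval]

lemma aeval_eq_eval_mapc (p : ℝ[X]) (z : ℂ) :
    (p.map (algebraMap ℝ ℂ)).eval z = aeval z p := by
  rw [eval_map, aeval_def]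

lemma conj_mapc (p : ℝ[X]) :
    (p.map (algebraMap ℝ ℂ)).map (starRingEnd ℂ) = p.map (algebraMap ℝ ℂ) := by
  ext n
  simp only [coeff_map]
  rw [show algebraMap ℝ ℂ (p.coeff n) = ((p.coeff n : ℝ) : ℂ) from rfl, Complex.conj_ofReal]

lemma parity_c {p : ℝ[X]} {c : ℝ} (h : p.comp (-X) = C c * p) (z : ℂ) :
    (p.map (algebraMap ℝ ℂ)).eval (-z) = (c:ℂ) * (p.map (algebraMap ℝ ℂ)).eval z := by
  have h2 := congrArg (map (algebraMap ℝ ℂ)) h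
  rw [map_comp, Polynomial.map_mul, map_C] at h2
  have h3 := congrArg (eval z) h2
  rw [eval_comp] at h3
  simpa using h3

end RQSP

namespace RQSP2
open RQSP

lemma complete_B (d : ℕ) (PR : ℝ[X]) (hdeg : PR.natDegree ≤ d)
    (hparity : PR.comp (-X) = C ((-1:ℝ)^d) * PR)
    (hbound : ∀ x ∈ Set.Icc (-1:ℝ) 1, |PR.eval x| ≤ 1) :
    ∃ B w : ℝ[X],
      B.natDegree ≤ d ∧
      B.comp (-X) = C ((-1:ℝ)^d) * B ∧
      (1 : ℝ[X]) - PR^2 = B^2 + w ∧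
      (∀ x : ℝ, x ∈ Set.Icc (-1:ℝ) 1 → 0 ≤ w.eval x) ∧
      (∀ x : ℝ, 1 ≤ |x| → w.eval x ≤ 0) ∧
      (Even d → ∀ x : ℝ, ∃ w₀ : ℝ, w₀ ≤ 0 ∧
        (w.map (algebraMap ℝ ℂ)).eval (Complex.I * (x:ℂ)) = (w₀ : ℂ)) := by
  set A : ℝ[X] := 1 - PR^2 with hAdef
  have hpar' : ∀ x : ℝ, PR.eval (-x) = (-1:ℝ)^d * PR.eval x := by
    intro x
    have := congrArg (eval x) hparity
    rw [eval_comp] at this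
    simpa using this
  have hsq : ((-1:ℝ)^d)^2 = 1 := by
    rw [← pow_mul, mul_comm, pow_mul]
    norm_num
  have hAeven : ∀ x : ℝ, A.eval (-x) = A.eval x := by
    intro x
    simp only [hAdef, eval_sub, eval_one, eval_pow, hpar' x, mul_pow, hsq, one_mul]
  obtain ⟨a, hA, hdeg2⟩ := even_decomp hAeven
  have hAdeg : A.natDegree ≤ 2*d := by
    refine le_trans (natDegree_sub_le _ _) ?_
    simp only [natDegree_one, natDegree_pow]
    omega
  have hadeg : a.natDegree ≤ d := by omega
  have hAa : ∀ x : ℝ, A.eval x = a.eval (x^2) := by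
    intro x
    rw [hA, eval_comp]
    simp
  have hann : ∀ t ∈ Set.Icc (0:ℝ) 1, 0 ≤ a.eval t := by
    intro t ht
    have hx : Real.sqrt t ∈ Set.Icc (-1:ℝ) 1 := by
      constructor
      · linarith [Real.sqrt_nonneg t]
      · exact Real.sqrt_le_one.mpr ht.2
    have h1 := hAa (Real.sqrt t)
    rw [Real.sq_sqrt ht.1] at h1
    have h2 := hbound _ hx
    have h3 := abs_le.mp h2
    have h4 : A.eval (Real.sqrt t) = 1 - (PR.eval (Real.sqrt t))^2 := by
      simp [hAdef]
    nlinarith [h3.1, h3.2, h1, h4]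
  rcases Nat.even_or_odd d with hev | hodd
  · -- even case
    obtain ⟨m, hm⟩ := hev
    have hm2 : d = 2*m := by omega
    obtain ⟨p, q, hapq, hp, _⟩ := (lukacs_pair m).1 a (by omega) hann
    have hw : A - (p.comp (X^2))^2 = X^2*(1-X^2)*(q.comp (X^2))^2 := by
      rw [hA, hapq]
      simp only [add_comp, mul_comp, pow_comp, X_comp, sub_comp, one_comp]
      ring
    refine ⟨p.comp (X^2), A - (p.comp (X^2))^2, ?_, ?_, by ring, ?_, ?_, ?_⟩
    · rw [natDegree_comp, natDegree_X_pow]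
      omega
    · rw [comp_assoc]
      have h1 : (X^2 : ℝ[X]).comp (-X) = X^2 := by
        rw [pow_comp, X_comp]
        ring
      rw [h1, Even.neg_one_pow ⟨m, hm⟩, C_1, one_mul]
    · intro x hx
      rw [hw]
      simp only [eval_mul, eval_pow, eval_sub, eval_one, eval_X]
      have h1 : 0 ≤ 1 - x^2 := by nlinarith [hx.1, hx.2]
      positivity
    · intro x hx
      rw [hw]
      simp only [eval_mul, eval_pow, eval_sub, eval_one, eval_X]
      have h1 : 1 ≤ x^2 := by nlinarith [sq_abs x, abs_nonneg x]
      have h2 : 0 ≤ (x^2*(x^2-1)) * ((q.comp (X^2)).eval x)^2 :=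
        mul_nonneg (mul_nonneg (sq_nonneg x) (by linarith)) (sq_nonneg _)
      nlinarith [h2]
    · intro _ x
      have hz : (Complex.I * (x:ℂ))^2 = ((-(x^2) : ℝ) : ℂ) := by
        push_cast
        rw [mul_pow, Complex.I_sq]
        ring
      have hqc : ((q.comp (X^2)).map (algebraMap ℝ ℂ)).eval (Complex.I * (x:ℂ))
          = ((q.eval (-(x^2)) : ℝ) : ℂ) := by
        rw [map_comp, eval_comp]
        simp only [Polynomial.map_pow, map_X, eval_pow, eval_X]
        rw [hz, evalc]
      refine ⟨(-(x^2)) * (1 + x^2) * (q.eval (-(x^2)))^2, ?_, ?_⟩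
      · have h2 : 0 ≤ x^2*(1+x^2)*(q.eval (-(x^2)))^2 := by positivity
        nlinarith [h2]
      · rw [hw]
        simp only [Polynomial.map_mul, Polynomial.map_sub, Polynomial.map_pow,
          Polynomial.map_one, map_X, eval_mul, eval_sub, eval_pow, eval_one, eval_X]
        rw [hz, hqc]
        push_cast
        ring
  · -- odd case
    obtain ⟨m, hm⟩ := hodd
    obtain ⟨p, q, hapq, hp, _⟩ := (lukacs_pair m).2 a (by omega) hann
    have hw : A - (X * p.comp (X^2))^2 = (1-X^2)*(q.comp (X^2))^2 := by
      rw [hA, hapq]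
      simp only [add_comp, mul_comp, pow_comp, X_comp, sub_comp, one_comp]
      ring
    refine ⟨X * p.comp (X^2), A - (X * p.comp (X^2))^2, ?_, ?_, by ring, ?_, ?_, ?_⟩
    · refine le_trans natDegree_mul_le ?_
      rw [natDegree_comp, natDegree_X_pow, natDegree_X]
      omega
    · rw [mul_comp, comp_assoc]
      have h1 : (X^2 : ℝ[X]).comp (-X) = X^2 := by
        rw [pow_comp, X_comp]
        ring
      rw [h1, X_comp, Odd.neg_one_pow ⟨m, by omega⟩]
      simp only [C_neg, C_1]
      ring
    · intro x hx
      rw [hw]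
      simp only [eval_mul, eval_pow, eval_sub, eval_one, eval_X]
      have h1 : 0 ≤ 1 - x^2 := by nlinarith [hx.1, hx.2]
      positivity
    · intro x hx
      rw [hw]
      simp only [eval_mul, eval_pow, eval_sub, eval_one, eval_X]
      have h1 : 1 ≤ x^2 := by nlinarith [sq_abs x, abs_nonneg x]
      have h2 : 0 ≤ (x^2-1) * ((q.comp (X^2)).eval x)^2 :=
        mul_nonneg (by linarith) (sq_nonneg _)
      nlinarith [h2]
    · intro hev
      exact absurd hev (by simp [Nat.odd_iff.mp ⟨m, hm⟩, Nat.even_iff])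

end RQSP2

open scoped ComplexOrder

/-- Real quantum signal processing: any real polynomial of definite parity bounded by 1 on
`[-1,1]` can be completed to a complex polynomial satisfying the QSP conditions. -/
theorem real_qsp_completion (d : ℕ) (hd : 1 ≤ d) (PR : Polynomial ℝ)
    (hdeg : PR.natDegree ≤ d)
    (hparity : ∀ x : ℝ, PR.eval (-x) = (-1) ^ d * PR.eval x)
    (hbound : ∀ x : ℝ, x ∈ Set.Icc (-1 : ℝ) 1 → |PR.eval x| ≤ 1) :
    ∃ P : Polynomial ℂ,
      P.natDegree ≤ d ∧
      (∀ x : ℝ, (P.eval (x : ℂ)).re = PR.eval x) ∧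
      (∀ x : ℂ, P.eval (-x) = (-1) ^ d * P.eval x) ∧
      (∀ x : ℝ, x ∈ Set.Icc (-1 : ℝ) 1 → ‖P.eval (x : ℂ)‖ ≤ 1) ∧
      (∀ x : ℝ, 1 ≤ |x| → 1 ≤ ‖P.eval (x : ℂ)‖) ∧
      (Even d → ∀ x : ℝ,
        (1 : ℂ) ≤ P.eval (Complex.I * (x : ℂ)) *
          (P.map (starRingEnd ℂ)).eval (Complex.I * (x : ℂ))) := by
  have hparpoly : PR.comp (-X) = C ((-1:ℝ)^d) * PR := by
    apply Polynomial.funext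
    intro x
    rw [eval_comp]
    simp [hparity x]
  obtain ⟨B, w, hBdeg, hBpar, hident, hwin, hwout, hwimag⟩ :=
    RQSP2.complete_B d PR hdeg hparpoly (fun x hx => hbound x hx)
  set Pc := PR.map (algebraMap ℝ ℂ) with hPcdef
  set Bc := B.map (algebraMap ℝ ℂ) with hBcdef
  have hevalP : ∀ x : ℝ, (Pc + C Complex.I * Bc).eval (x:ℂ)
      = ((PR.eval x : ℝ) : ℂ) + Complex.I * ((B.eval x : ℝ) : ℂ) := by
    intro x
    simp only [eval_add, eval_mul, eval_C, hPcdef, hBcdef, RQSP.evalc]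
  have hidentx : ∀ x : ℝ, (B.eval x)^2 + w.eval x = 1 - (PR.eval x)^2 := by
    intro x
    have := congrArg (eval x) hident
    simp only [eval_sub, eval_add, eval_pow, eval_one] at this
    linarith
  have habs : ∀ x : ℝ, (‖(Pc + C Complex.I * Bc).eval (x:ℂ)‖)^2
      = (PR.eval x)^2 + (B.eval x)^2 := by
    intro x
    rw [hevalP x, Complex.sq_norm]
    simp only [Complex.normSq_apply, Complex.add_re, Complex.add_im, Complex.mul_re,
      Complex.mul_im, Complex.I_re, Complex.I_im, Complex.ofReal_re, Complex.ofReal_im]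
    ring
  refine ⟨Pc + C Complex.I * Bc, ?_, ?_, ?_, ?_, ?_, ?_⟩
  · refine le_trans (natDegree_add_le _ _) (max_le ?_ ?_)
    · exact le_trans natDegree_map_le hdeg
    · refine le_trans natDegree_mul_le ?_
      rw [natDegree_C]
      have h5 : Bc.natDegree ≤ d := le_trans natDegree_map_le hBdeg
      omega
  · intro x
    rw [hevalP x]
    simp
  · intro z
    simp only [eval_add, eval_mul, eval_C]
    rw [RQSP.parity_c hparpoly z, RQSP.parity_c hBpar z]
    push_cast
    ring
  · intro x hx
    have h1 := habs x
    have h2 := hidentx x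
    have h3 := hwin x hx
    have h4 := norm_nonneg ((Pc + C Complex.I * Bc).eval (x:ℂ))
    nlinarith [h1, h2, h3, h4]
  · intro x hx
    have h1 := habs x
    have h2 := hidentx x
    have h3 := hwout x hx
    have h4 := norm_nonneg ((Pc + C Complex.I * Bc).eval (x:ℂ))
    nlinarith [h1, h2, h3, h4]
  · intro hev x
    obtain ⟨w₀, hw₀, hw₀eq⟩ := hwimag hev x
    set z := Complex.I * (x:ℂ) with hzdef
    have hc := congrArg (Polynomial.map (algebraMap ℝ ℂ)) hident
    simp only [Polynomial.map_sub, Polynomial.map_add, Polynomial.map_pow,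
      Polynomial.map_one] at hc
    have hcz := congrArg (eval z) hc
    simp only [eval_sub, eval_add, eval_pow, eval_one] at hcz
    rw [← hPcdef, ← hBcdef] at hcz
    rw [hw₀eq] at hcz
    have hPstar : (Pc + C Complex.I * Bc).map (starRingEnd ℂ)
        = Pc + C (-Complex.I) * Bc := by
      rw [Polynomial.map_add, Polynomial.map_mul, map_C, Complex.conj_I,
        hPcdef, hBcdef, RQSP.conj_mapc, RQSP.conj_mapc]
    have hprod : (Pc + C Complex.I * Bc).eval z
          * ((Pc + C Complex.I * Bc).map (starRingEnd ℂ)).eval z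
        = (Pc.eval z)^2 + (Bc.eval z)^2 := by
      rw [hPstar]
      simp only [eval_add, eval_mul, eval_C, eval_neg]
      linear_combination (-((Bc.eval z)^2)) * Complex.I_sq
    rw [hprod]
    have hval : (Pc.eval z)^2 + (Bc.eval z)^2 = ((1 - w₀ : ℝ) : ℂ) := by
      push_cast
      linear_combination -hcz
    rw [hval, show (1:ℂ) = ((1:ℝ):ℂ) by norm_num]
    exact Complex.real_le_real.mpr (by linarith)
end

section
/- Let λ > 0 and let n be a nonnegative integer. Then sup_{x ∈ [−1,+1]} | p_{exp,λ,n}(x) | ≤ 1. -/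
open Real

/-- The modified Bessel function of the first kind,
`I_j(λ) = (1/π) ∫_0^π e^{λ cos θ} cos(jθ) dθ`. -/
noncomputable def besselI (j : ℕ) (l : ℝ) : ℝ :=
  (1 / Real.pi) * ∫ θ in (0 : ℝ)..Real.pi, Real.exp (l * Real.cos θ) * Real.cos (j * θ)

/-- The degree-`n` Chebyshev–Bessel polynomial approximation of `e^{-λ(x+1)}`:
`p_{exp,λ,n}(x) = e^{-λ}(I_0(λ) + 2 ∑_{j=1}^n I_j(λ) T_j(-x))`. -/
noncomputable def pExp (l : ℝ) (n : ℕ) (x : ℝ) : ℝ :=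
  Real.exp (-l) * (besselI 0 l +
    2 * ∑ j ∈ Finset.Icc 1 n, besselI j l * (Polynomial.Chebyshev.T ℝ (j : ℤ)).eval (-x))

namespace PExpAux

lemma intCos (k : ℤ) : ∫ θ in (0:ℝ)..Real.pi, Real.cos (k * θ) = if k = 0 then Real.pi else 0 := by
  rcases eq_or_ne k 0 with h | h
  · simp [h, Real.pi_pos.le]
  · have hk : (k:ℝ) ≠ 0 := Int.cast_ne_zero.mpr h
    have := intervalIntegral.integral_comp_mul_left (a := (0:ℝ)) (b := Real.pi)
      (f := fun x => Real.cos x) (c := (k:ℝ)) hk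
    simp only [mul_zero] at this
    rw [this, integral_cos, Real.sin_int_mul_pi, Real.sin_zero, if_neg h]
    simp

noncomputable def CC (k j : ℕ) : ℝ := ∫ θ in (0:ℝ)..Real.pi, Real.cos θ ^ k * Real.cos (j * θ)

lemma CC_zero (j : ℕ) : CC 0 j = if j = 0 then Real.pi else 0 := by
  have h := intCos (j : ℤ)
  push_cast at h
  simpa [CC] using h

lemma contOn (k j : ℕ) : IntervalIntegrable (fun θ => Real.cos θ ^ k * Real.cos (j * θ))
    MeasureTheory.volume 0 Real.pi :=
  (((Real.continuous_cos.pow k).mul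
    (Real.continuous_cos.comp (continuous_const.mul continuous_id)))).intervalIntegrable _ _

lemma CC_rec0 (k : ℕ) : CC (k+1) 0 = CC k 1 := by
  unfold CC
  apply intervalIntegral.integral_congr
  intro θ _
  simp [pow_succ]

lemma CC_rec (k j : ℕ) (hj : 1 ≤ j) :
    CC (k+1) j = (CC k (j-1) + CC k (j+1)) / 2 := by
  have key : 2 * CC (k+1) j = CC k (j-1) + CC k (j+1) := by
    unfold CC
    rw [← intervalIntegral.integral_const_mul,
      ← intervalIntegral.integral_add (contOn k (j-1)) (contOn k (j+1))]
    apply intervalIntegral.integral_congr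
    intro θ _
    have hcast : ((j - 1 : ℕ) : ℝ) = (j : ℝ) - 1 := by
      push_cast [hj]; ring
    have trig : Real.cos (((j:ℝ)-1) * θ) + Real.cos (((j:ℝ)+1) * θ)
        = 2 * (Real.cos ((j:ℝ)*θ) * Real.cos θ) := by
      rw [show ((j:ℝ)-1)*θ = (j:ℝ)*θ - θ by ring, show ((j:ℝ)+1)*θ = (j:ℝ)*θ + θ by ring,
        Real.cos_sub, Real.cos_add]
      ring
    simp only [hcast]
    push_cast
    rw [pow_succ]
    linear_combination (-(Real.cos θ ^ k)) * trig
  linarith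

lemma CC_nonneg (k j : ℕ) : 0 ≤ CC k j := by
  induction k generalizing j with
  | zero => rw [CC_zero]; split <;> positivity
  | succ k ih =>
    rcases Nat.eq_zero_or_pos j with h | h
    · rw [h, CC_rec0]; exact ih 1
    · rw [CC_rec k j h]; have := ih (j-1); have := ih (j+1); linarith

lemma CC_le_pi (k j : ℕ) : CC k j ≤ Real.pi := by
  have h : ‖∫ θ in (0:ℝ)..Real.pi, Real.cos θ ^ k * Real.cos (j * θ)‖ ≤ 1 * |Real.pi - 0| := by
    apply intervalIntegral.norm_integral_le_of_norm_le_const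
    intro x _
    rw [Real.norm_eq_abs, abs_mul]
    calc |Real.cos x ^ k| * |Real.cos (j*x)| ≤ 1 * 1 := by
          apply mul_le_mul ?_ (Real.abs_cos_le_one _) (abs_nonneg _) zero_le_one
          rw [abs_pow]; exact pow_le_one₀ (abs_nonneg _) (Real.abs_cos_le_one _)
      _ = 1 := one_mul 1
  rw [Real.norm_eq_abs, sub_zero, abs_of_pos Real.pi_pos, one_mul] at h
  exact le_trans (le_abs_self _) h

noncomputable def SS (k n : ℕ) : ℝ := CC k 0 + 2 * ∑ j ∈ Finset.Icc 1 n, CC k j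

lemma SS_succ_top (k n : ℕ) : SS k (n+1) = SS k n + 2 * CC k (n+1) := by
  unfold SS
  rw [Finset.sum_Icc_succ_top (by omega : 1 ≤ n+1)]
  ring

lemma SS_step (k n : ℕ) : SS (k+1) n + CC k n + CC k (n+1) = SS k (n+1) := by
  induction n with
  | zero =>
    simp [SS, CC_rec0, CC_rec k 1 le_rfl]
    ring
  | succ n ih =>
    rw [SS_succ_top (k+1) n, SS_succ_top k (n+1), CC_rec k (n+1) (by omega)]
    have h2 : n + 1 - 1 = n := by omega
    rw [h2]
    linarith [ih]

lemma SS_le_pi (k n : ℕ) : SS k n ≤ Real.pi := by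
  induction k generalizing n with
  | zero =>
    unfold SS
    rw [CC_zero 0, if_pos rfl]
    have : ∑ j ∈ Finset.Icc 1 n, CC 0 j = 0 := by
      apply Finset.sum_eq_zero
      intro j hj
      rw [CC_zero j, if_neg (by simp at hj; omega)]
    rw [this]; ring_nf; simp
  | succ k ih =>
    have := SS_step k n
    have h1 := CC_nonneg k n
    have h2 := CC_nonneg k (n+1)
    linarith [ih (n+1)]

lemma SS_nonneg (k n : ℕ) : 0 ≤ SS k n := by
  unfold SS
  have : 0 ≤ ∑ j ∈ Finset.Icc 1 n, CC k j := Finset.sum_nonneg fun j _ => CC_nonneg k j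
  linarith [CC_nonneg k 0]

noncomputable def fk (l : ℝ) (j k : ℕ) : C(ℝ, ℝ) :=
  ⟨fun θ => l ^ k / (Nat.factorial k) * (Real.cos θ ^ k * Real.cos (j * θ)),
   by continuity⟩

lemma fk_norm_le (l : ℝ) (hl : 0 ≤ l) (j k : ℕ) :
    ‖(fk l j k).restrict (⟨Set.uIcc 0 Real.pi, isCompact_uIcc⟩ : TopologicalSpace.Compacts ℝ)‖
      ≤ l ^ k / (Nat.factorial k) := by
  apply ContinuousMap.norm_le _ (by positivity) |>.mpr
  rintro ⟨x, hx⟩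
  simp only [ContinuousMap.restrict_apply, fk, ContinuousMap.coe_mk, Real.norm_eq_abs, abs_mul]
  have h1 : |l ^ k / (Nat.factorial k)| = l ^ k / Nat.factorial k := abs_of_nonneg (by positivity)
  rw [h1]
  have h2 : |Real.cos x ^ k * Real.cos (j * x)| ≤ 1 := by
    rw [abs_mul]
    calc |Real.cos x ^ k| * |Real.cos (j*x)| ≤ 1 * 1 := by
          apply mul_le_mul ?_ (Real.abs_cos_le_one _) (abs_nonneg _) zero_le_one
          rw [abs_pow]; exact pow_le_one₀ (abs_nonneg _) (Real.abs_cos_le_one _)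
      _ = 1 := one_mul 1
  rw [← abs_mul] at *
  exact mul_le_of_le_one_right (by positivity) h2

lemma besselI_eq_tsum (j : ℕ) (l : ℝ) (hl : 0 < l) :
    besselI j l = (1 / Real.pi) * ∑' k : ℕ, l ^ k / (Nat.factorial k) * CC k j := by
  unfold besselI CC
  congr 1
  have hsum : Summable fun k : ℕ =>
      ‖(fk l j k).restrict (⟨Set.uIcc 0 Real.pi, isCompact_uIcc⟩ :
        TopologicalSpace.Compacts ℝ)‖ := by
    apply Summable.of_nonneg_of_le (fun k => norm_nonneg _) (fun k => fk_norm_le l hl.le j k)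
    exact Real.summable_pow_div_factorial l
  have key := intervalIntegral.tsum_intervalIntegral_eq_of_summable_norm
    (a := 0) (b := Real.pi) (f := fk l j) hsum
  have hpt : ∀ θ : ℝ, ∑' k : ℕ, (fk l j k) θ = Real.exp (l * Real.cos θ) * Real.cos (j * θ) := by
    intro θ
    have : ∑' k : ℕ, (fk l j k) θ
        = (∑' k : ℕ, (l * Real.cos θ) ^ k / (Nat.factorial k)) * Real.cos (j * θ) := by
      rw [← tsum_mul_right]
      congr 1; ext k
      simp only [fk, ContinuousMap.coe_mk, mul_pow]
      ring
    rw [this]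
    congr 1
    rw [Real.exp_eq_exp_ℝ, NormedSpace.exp_eq_tsum_div]
  calc (∫ θ in (0:ℝ)..Real.pi, Real.exp (l * Real.cos θ) * Real.cos (j * θ))
      = ∫ θ in (0:ℝ)..Real.pi, ∑' k : ℕ, (fk l j k) θ := by
        apply intervalIntegral.integral_congr; intro θ _; exact (hpt θ).symm
    _ = ∑' k : ℕ, ∫ θ in (0:ℝ)..Real.pi, (fk l j k) θ := key.symm
    _ = ∑' k : ℕ, l ^ k / (Nat.factorial k) * CC k j := by
        congr 1; ext k
        simp only [fk, ContinuousMap.coe_mk, CC]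
        rw [← intervalIntegral.integral_const_mul]

lemma term_summable (l : ℝ) (hl : 0 < l) (j : ℕ) :
    Summable fun k : ℕ => l ^ k / (Nat.factorial k) * CC k j := by
  apply Summable.of_nonneg_of_le (f := fun k => l ^ k / (Nat.factorial k) * Real.pi)
  · intro k; have := CC_nonneg k j; positivity
  · intro k
    exact mul_le_mul_of_nonneg_left (CC_le_pi k j) (by positivity)
  · exact (Real.summable_pow_div_factorial l).mul_right Real.pi

lemma besselI_nonneg (j : ℕ) (l : ℝ) (hl : 0 < l) : 0 ≤ besselI j l := by
  rw [besselI_eq_tsum j l hl]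
  apply mul_nonneg (by positivity)
  apply tsum_nonneg
  intro k
  have := CC_nonneg k j
  positivity

lemma sum_besselI_le (l : ℝ) (hl : 0 < l) (n : ℕ) :
    besselI 0 l + 2 * ∑ j ∈ Finset.Icc 1 n, besselI j l ≤ Real.exp l := by
  have hrw : ∀ j : ℕ, besselI j l = (1 / Real.pi) * ∑' k : ℕ, l ^ k / (Nat.factorial k) * CC k j :=
    fun j => besselI_eq_tsum j l hl
  have hswap : ∑ j ∈ Finset.Icc 1 n, ∑' k : ℕ, l ^ k / (Nat.factorial k) * CC k j
      = ∑' k : ℕ, ∑ j ∈ Finset.Icc 1 n, l ^ k / (Nat.factorial k) * CC k j :=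
    (Summable.tsum_finsetSum (fun j _ => term_summable l hl j)).symm
  have hSS : ∀ k : ℕ, l ^ k / (Nat.factorial k) * CC k 0
      + 2 * ∑ j ∈ Finset.Icc 1 n, l ^ k / (Nat.factorial k) * CC k j
      = l ^ k / (Nat.factorial k) * SS k n := by
    intro k
    rw [← Finset.mul_sum, SS]
    ring
  have hsum1 : Summable fun k : ℕ => l ^ k / (Nat.factorial k) * SS k n := by
    apply Summable.of_nonneg_of_le (f := fun k => l ^ k / (Nat.factorial k) * Real.pi)
    · intro k; have := SS_nonneg k n; positivity
    · intro k; exact mul_le_mul_of_nonneg_left (SS_le_pi k n) (by positivity)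
    · exact (Real.summable_pow_div_factorial l).mul_right Real.pi
  have hcombined : besselI 0 l + 2 * ∑ j ∈ Finset.Icc 1 n, besselI j l
      = (1 / Real.pi) * ∑' k : ℕ, l ^ k / (Nat.factorial k) * SS k n := by
    simp only [hrw, ← Finset.mul_sum]
    rw [hswap]
    have : (∑' k : ℕ, l ^ k / (Nat.factorial k) * CC k 0)
        + 2 * ∑' k : ℕ, ∑ j ∈ Finset.Icc 1 n, l ^ k / (Nat.factorial k) * CC k j
        = ∑' k : ℕ, l ^ k / (Nat.factorial k) * SS k n := by
      rw [← tsum_mul_left (a := (2:ℝ)),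
        ← Summable.tsum_add (term_summable l hl 0) (by
          apply Summable.mul_left
          exact summable_sum fun j _ => term_summable l hl j)]
      congr 1; ext k
      rw [← hSS k]
    rw [← this]
    ring
  rw [hcombined]
  have hle : ∑' k : ℕ, l ^ k / (Nat.factorial k) * SS k n
      ≤ ∑' k : ℕ, l ^ k / (Nat.factorial k) * Real.pi := by
    apply Summable.tsum_le_tsum _ hsum1 ((Real.summable_pow_div_factorial l).mul_right Real.pi)
    intro k
    exact mul_le_mul_of_nonneg_left (SS_le_pi k n) (by positivity)
  have hexp : ∑' k : ℕ, l ^ k / (Nat.factorial k) * Real.pi = Real.exp l * Real.pi := by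
    rw [tsum_mul_right]
    congr 1
    rw [Real.exp_eq_exp_ℝ, NormedSpace.exp_eq_tsum_div]
  calc (1 / Real.pi) * ∑' k : ℕ, l ^ k / (Nat.factorial k) * SS k n
      ≤ (1 / Real.pi) * (Real.exp l * Real.pi) := by
        apply mul_le_mul_of_nonneg_left _ (by positivity)
        rw [← hexp]; exact hle
    _ = Real.exp l := by
        field_simp

end PExpAux

/-- The polynomial `p_{exp,λ,n}` is bounded by `1` in absolute value on `[-1,1]`. -/
theorem pExp_bound (l : ℝ) (hl : 0 < l) (n : ℕ) :
    ∀ x ∈ Set.Icc (-1 : ℝ) 1, |pExp l n x| ≤ 1 := by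
  intro x hx
  obtain ⟨hx1, hx2⟩ := hx
  have hT : ∀ j : ℕ, |(Polynomial.Chebyshev.T ℝ (j : ℤ)).eval (-x)| ≤ 1 := by
    intro j
    have hmem : -x ∈ Set.Icc (-1:ℝ) 1 := ⟨by linarith, by linarith⟩
    have hcos : Real.cos (Real.arccos (-x)) = -x := Real.cos_arccos hmem.1 hmem.2
    rw [← hcos, Polynomial.Chebyshev.T_real_cos]
    exact Real.abs_cos_le_one _
  have habs : |besselI 0 l + 2 * ∑ j ∈ Finset.Icc 1 n,
      besselI j l * (Polynomial.Chebyshev.T ℝ (j : ℤ)).eval (-x)|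
      ≤ besselI 0 l + 2 * ∑ j ∈ Finset.Icc 1 n, besselI j l := by
    have h1 : |∑ j ∈ Finset.Icc 1 n, besselI j l * (Polynomial.Chebyshev.T ℝ (j : ℤ)).eval (-x)|
        ≤ ∑ j ∈ Finset.Icc 1 n, besselI j l := by
      calc |∑ j ∈ Finset.Icc 1 n, besselI j l * (Polynomial.Chebyshev.T ℝ (j : ℤ)).eval (-x)|
          ≤ ∑ j ∈ Finset.Icc 1 n,
            |besselI j l * (Polynomial.Chebyshev.T ℝ (j : ℤ)).eval (-x)| :=
            Finset.abs_sum_le_sum_abs _ _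
        _ ≤ ∑ j ∈ Finset.Icc 1 n, besselI j l := by
            apply Finset.sum_le_sum
            intro j _
            rw [abs_mul, abs_of_nonneg (PExpAux.besselI_nonneg j l hl)]
            exact mul_le_of_le_one_right (PExpAux.besselI_nonneg j l hl) (hT j)
    calc |besselI 0 l + 2 * ∑ j ∈ Finset.Icc 1 n,
        besselI j l * (Polynomial.Chebyshev.T ℝ (j : ℤ)).eval (-x)|
        ≤ |besselI 0 l| + |2 * ∑ j ∈ Finset.Icc 1 n,
          besselI j l * (Polynomial.Chebyshev.T ℝ (j : ℤ)).eval (-x)| := abs_add_le _ _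
      _ ≤ besselI 0 l + 2 * ∑ j ∈ Finset.Icc 1 n, besselI j l := by
          rw [abs_of_nonneg (PExpAux.besselI_nonneg 0 l hl), abs_mul, abs_two]
          have := h1
          linarith
  have hsum := PExpAux.sum_besselI_le l hl n
  unfold pExp
  rw [abs_mul, abs_of_pos (Real.exp_pos (-l))]
  calc Real.exp (-l) * |besselI 0 l + 2 * ∑ j ∈ Finset.Icc 1 n,
      besselI j l * (Polynomial.Chebyshev.T ℝ (j : ℤ)).eval (-x)|
      ≤ Real.exp (-l) * Real.exp l := by
        apply mul_le_mul_of_nonneg_left _ (Real.exp_pos (-l)).le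
        exact le_trans habs hsum
    _ = 1 := by rw [← Real.exp_add]; simp
end

section
/- Let k > 0, ε > 0, t > 0, and let w > 0 satisfy w e^{w} = 2¹⁶ k² / (π t ε⁸). Let n be a real number with n ≥ 1 + 2√(t w). Then (4k/(√π n)) · 2 e^{−(n−1)²/(8t)} ≤ ε⁴ / 64. -/
/-- With `w = W(2¹⁶k²/(πtε⁸))` (Lambert-W) and `n ≥ 1 + 2√(tw)`, the truncation term
of the error-function approximation satisfies `(4k/(√π n))·2e^{−(n−1)²/(8t)} ≤ ε⁴/64`. -/
theorem erf_truncation_bound (k ε t w n : ℝ) (hk : 0 < k) (hε : 0 < ε)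
    (ht : 0 < t) (hw : 0 < w)
    (hW : w * Real.exp w = 2 ^ 16 * k ^ 2 / (Real.pi * t * ε ^ 8))
    (hn : 1 + 2 * Real.sqrt (t * w) ≤ n) :
    (4 * k / (Real.sqrt Real.pi * n)) * (2 * Real.exp (-(n - 1) ^ 2 / (8 * t))) ≤
      ε ^ 4 / 64 := by
  have hπ : (0:ℝ) < Real.pi := Real.pi_pos
  set s := Real.sqrt (t * w) with hs
  have hs0 : 0 ≤ s := Real.sqrt_nonneg _
  have hs2 : s ^ 2 = t * w := Real.sq_sqrt (by positivity)
  have hn0 : (0:ℝ) < n := by nlinarith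
  have hsp : 0 < Real.sqrt Real.pi := Real.sqrt_pos.mpr hπ
  -- exp(-w)
  have hew : Real.exp (-w) = w * (Real.pi * t * ε ^ 8) / (2 ^ 16 * k ^ 2) := by
    have h1 : Real.exp (-w) * (w * Real.exp w) = w := by
      rw [mul_comm w (Real.exp w), ← mul_assoc, ← Real.exp_add]
      simp
    rw [hW] at h1
    field_simp at h1 ⊢
    linarith
  have key : (256 * k * Real.exp (-(w/2))) ^ 2 = (Real.sqrt Real.pi * ε ^ 4 * s) ^ 2 := by
    have h2 : Real.exp (-(w/2)) * Real.exp (-(w/2)) = Real.exp (-w) := by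
      rw [← Real.exp_add]; ring_nf
    have h3 : Real.sqrt Real.pi ^ 2 = Real.pi := Real.sq_sqrt hπ.le
    have : (256 * k * Real.exp (-(w/2))) ^ 2 = 2 ^ 16 * k ^ 2 * (Real.exp (-(w/2)) * Real.exp (-(w/2))) := by ring
    have h4 : (Real.sqrt Real.pi * ε ^ 4 * s) ^ 2 = Real.pi * ε ^ 8 * (t * w) := by
      rw [mul_pow, mul_pow, h3, hs2]; ring
    rw [this, h2, hew, h4]
    field_simp
  have hA : 256 * k * Real.exp (-(w/2)) = Real.sqrt Real.pi * ε ^ 4 * s := by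
    have h1 : 0 ≤ 256 * k * Real.exp (-(w/2)) := by positivity
    have h2 : 0 ≤ Real.sqrt Real.pi * ε ^ 4 * s := by positivity
    calc 256 * k * Real.exp (-(w/2)) = Real.sqrt ((256 * k * Real.exp (-(w/2)))^2) :=
          (Real.sqrt_sq h1).symm
      _ = Real.sqrt ((Real.sqrt Real.pi * ε ^ 4 * s)^2) := by rw [key]
      _ = _ := Real.sqrt_sq h2
  -- exponential comparison
  have hE : Real.exp (-(n - 1) ^ 2 / (8 * t)) ≤ Real.exp (-(w/2)) := by
    apply Real.exp_le_exp.mpr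
    rw [div_le_iff₀ (by positivity : (0:ℝ) < 8 * t)] at *
    nlinarith [hs2, sq_nonneg (n - 1 - 2*s)]
  rw [div_mul_eq_mul_div, div_le_div_iff₀ (by positivity) (by norm_num : (0:ℝ) < 64)]
  have h4 : k * Real.exp (-(n - 1) ^ 2 / (8 * t)) ≤ k * Real.exp (-(w/2)) :=
    mul_le_mul_of_nonneg_left hE hk.le
  have h5 : 2 * s ≤ n := by nlinarith
  nlinarith [mul_le_mul_of_nonneg_left h5 (by positivity : (0:ℝ) ≤ Real.sqrt Real.pi * ε ^ 4), hA, h4]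
end
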